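/- Let 𝔅 be a bornology with closed base on a metric space X. Then X satisfies S_fin(𝒪_{𝔅ˢ}, 𝒪) if and only if X satisfies S_fin(Γ_{𝔅ˢ}, 𝒪). -/

import Mathlib

open Set Metric Filter

/-- A bornology on a metric space: an ideal of subsets covering `X`. -/
structure BornologyOn (X : Type*) [MetricSpace X] where
  sets : Set (Set X)
  union_mem : ∀ {A B : Set X}, A ∈ sets → B ∈ sets → A ∪ B ∈ sets
  subset_mem : ∀ {A B : Set X}, A ∈ sets → B ⊆ A → B ∈ sets
  covers : ∀ x : X, ∃ A ∈ sets, x ∈ A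

variable {X : Type*} [MetricSpace X]

/-- `𝔅` has a closed base: a cofinal subfamily consisting of closed sets. -/
def HasClosedBase (𝔅 : BornologyOn X) : Prop :=
  ∃ base ⊆ 𝔅.sets, (∀ C ∈ base, IsClosed C) ∧ ∀ A ∈ 𝔅.sets, ∃ C ∈ base, A ⊆ C

/-- The `δ`-enlargement `B^δ = ⋃_{x ∈ B} S(x, δ)`. -/
def enlarge (B : Set X) (δ : ℝ) : Set X := ⋃ x ∈ B, ball x δ

/-- A `𝔅ˢ`-cover: `X ∉ 𝒰` and every `B ∈ 𝔅` has `B^δ ⊆ U` for some `U ∈ 𝒰`, `δ > 0`. -/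
def IsBCover (𝔅 : BornologyOn X) (𝒰 : Set (Set X)) : Prop :=
  univ ∉ 𝒰 ∧ ∀ B ∈ 𝔅.sets, ∃ U ∈ 𝒰, ∃ δ > 0, enlarge B δ ⊆ U

/-- An open `𝔅ˢ`-cover. -/
def IsOpenBCover (𝔅 : BornologyOn X) (𝒰 : Set (Set X)) : Prop :=
  (∀ U ∈ 𝒰, IsOpen U) ∧ (∀ x : X, ∃ U ∈ 𝒰, x ∈ U) ∧ IsBCover 𝔅 𝒰

/-- A `γ_{𝔅ˢ}`-cover (set form): infinite family of open sets such that for each `B ∈ 𝔅`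
all but finitely many members contain some enlargement of `B`. -/
def IsGammaBCover (𝔅 : BornologyOn X) (𝒰 : Set (Set X)) : Prop :=
  𝒰.Infinite ∧ (∀ U ∈ 𝒰, IsOpen U) ∧
    ∀ B ∈ 𝔅.sets, {U ∈ 𝒰 | ¬ ∃ δ > 0, enlarge B δ ⊆ U}.Finite

/-- A `γ_{𝔅ˢ}`-cover given as a sequence `{Uₙ}`: infinite, open, and for each `B ∈ 𝔅`
there are `n₀` and `δₙ > 0` with `B^{δₙ} ⊆ Uₙ` for all `n ≥ n₀`. -/
def IsGammaBSeq (𝔅 : BornologyOn X) (U : ℕ → Set X) : Prop :=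
  (Set.range U).Infinite ∧ (∀ n, IsOpen (U n)) ∧
    ∀ B ∈ 𝔅.sets, ∃ n₀, ∀ n ≥ n₀, ∃ δ > 0, enlarge B δ ⊆ U n

/-- A `γ`-cover: infinite family of open sets, every point in all but finitely many members. -/
def IsGammaCover (𝒰 : Set (Set X)) : Prop :=
  𝒰.Infinite ∧ (∀ U ∈ 𝒰, IsOpen U) ∧ ∀ x : X, {U ∈ 𝒰 | x ∉ U}.Finite

/-- An open cover of `X`. -/
def IsOpenCover (𝒰 : Set (Set X)) : Prop :=
  (∀ U ∈ 𝒰, IsOpen U) ∧ ∀ x : X, ∃ U ∈ 𝒰, x ∈ U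

/-- The family `𝒪_{𝔅ˢ}` of countable open `𝔅ˢ`-covers. -/
def OBs (𝔅 : BornologyOn X) : Set (Set (Set X)) :=
  {𝒰 | 𝒰.Countable ∧ IsOpenBCover 𝔅 𝒰}

/-- The family `Γ_{𝔅ˢ}` of countable `γ_{𝔅ˢ}`-covers. -/
def GBs (𝔅 : BornologyOn X) : Set (Set (Set X)) :=
  {𝒰 | 𝒰.Countable ∧ IsGammaBCover 𝔅 𝒰}

/-- The family `𝒪` of countable open covers. -/
def Ocov (X : Type*) [MetricSpace X] : Set (Set (Set X)) :=
  {𝒰 | 𝒰.Countable ∧ IsOpenCover 𝒰}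

/-- The selection principle `S₁(𝒜, ℬ)`. -/
def S1 (𝒜 ℬ : Set (Set (Set X))) : Prop :=
  ∀ 𝒰 : ℕ → Set (Set X), (∀ n, 𝒰 n ∈ 𝒜) →
    ∃ sel : ℕ → Set X, (∀ n, sel n ∈ 𝒰 n) ∧ Set.range sel ∈ ℬ

/-- The selection principle `S_fin(𝒜, ℬ)`. -/
def Sfin (𝒜 ℬ : Set (Set (Set X))) : Prop :=
  ∀ 𝒰 : ℕ → Set (Set X), (∀ n, 𝒰 n ∈ 𝒜) →
    ∃ 𝒱 : ℕ → Set (Set X), (∀ n, 𝒱 n ⊆ 𝒰 n ∧ (𝒱 n).Finite) ∧ (⋃ n, 𝒱 n) ∈ ℬ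

/-- The selection principle `U_fin(𝒜, ℬ)`. -/
def Ufin (𝒜 ℬ : Set (Set (Set X))) : Prop :=
  ∀ 𝒰 : ℕ → Set (Set X), (∀ n, 𝒰 n ∈ 𝒜) →
    ∃ 𝒱 : ℕ → Set (Set X), (∀ n, 𝒱 n ⊆ 𝒰 n ∧ (𝒱 n).Finite) ∧
      ((Set.range fun n => ⋃₀ 𝒱 n) ∈ ℬ ∨ ∃ n, ⋃₀ 𝒱 n = univ)

/-- ONE has a winning strategy in `G₁(𝒜, ℬ)`. -/
def OneWinsG1 (𝒜 ℬ : Set (Set (Set X))) : Prop :=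
  ∃ σ : List (Set X) → Set (Set X),
    (∀ h, σ h ∈ 𝒜) ∧
    ∀ play : ℕ → Set X,
      (∀ n, play n ∈ σ (List.ofFn fun i : Fin n => play i.1)) →
      Set.range play ∉ ℬ

/-- ONE has a winning strategy in `G_fin(𝒜, ℬ)`. -/
def OneWinsGfin (𝒜 ℬ : Set (Set (Set X))) : Prop :=
  ∃ σ : List (Set (Set X)) → Set (Set X),
    (∀ h, σ h ∈ 𝒜) ∧
    ∀ play : ℕ → Set (Set X),
      (∀ n, play n ⊆ σ (List.ofFn fun i : Fin n => play i.1) ∧ (play n).Finite) →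
      (⋃ n, play n) ∉ ℬ

/-- The winning condition in the `𝔅ˢ`-Hurewicz game / property: every `B ∈ 𝔅` is
eventually `δ`-enlarged into some member of `𝒱ₙ`. -/
def HurSel (𝔅 : BornologyOn X) (𝒱 : ℕ → Set (Set X)) : Prop :=
  ∀ B ∈ 𝔅.sets, ∃ n₀, ∀ n ≥ n₀, ∃ δ > 0, ∃ U ∈ 𝒱 n, enlarge B δ ⊆ U

/-- The strong `𝔅`-Hurewicz property. -/
def BsHurewicz (𝔅 : BornologyOn X) : Prop :=
  ∀ 𝒰 : ℕ → Set (Set X), (∀ n, 𝒰 n ∈ OBs 𝔅) →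
    ∃ 𝒱 : ℕ → Set (Set X), (∀ n, 𝒱 n ⊆ 𝒰 n ∧ (𝒱 n).Finite) ∧ HurSel 𝔅 𝒱

/-- ONE has a winning strategy in the `𝔅ˢ`-Hurewicz game. -/
def OneWinsHurewicz (𝔅 : BornologyOn X) : Prop :=
  ∃ σ : List (Set (Set X)) → Set (Set X),
    (∀ h, σ h ∈ OBs 𝔅) ∧
    ∀ play : ℕ → Set (Set X),
      (∀ n, play n ⊆ σ (List.ofFn fun i : Fin n => play i.1) ∧ (play n).Finite) →
      ¬ HurSel 𝔅 play

/-- A `𝔅ˢ`-groupable cover. -/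
def BsGroupable (𝔅 : BornologyOn X) (𝒰 : Set (Set X)) : Prop :=
  ∃ 𝒢 : ℕ → Set (Set X), (∀ n, (𝒢 n).Finite) ∧
    (∀ m n, m ≠ n → Disjoint (𝒢 m) (𝒢 n)) ∧ (⋃ n, 𝒢 n) = 𝒰 ∧ HurSel 𝔅 𝒢

/-- The family `𝒪_{𝔅ˢ}^{gp}` of `𝔅ˢ`-groupable open covers. -/
def OBsgp (𝔅 : BornologyOn X) : Set (Set (Set X)) :=
  {𝒰 | IsOpenCover 𝒰 ∧ BsGroupable 𝔅 𝒰}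

/-- The basic `τ_𝔅ˢ` neighbourhood `[B, ε]ˢ(f)` in `C(X)`. -/
def sball (f : C(X, ℝ)) (B : Set X) (ε : ℝ) : Set C(X, ℝ) :=
  {g | ∃ δ > 0, ∀ x ∈ enlarge B δ, |f x - g x| < ε}

/-- The topology `τ_𝔅ˢ` of strong uniform convergence on `𝔅` on `C(X)`. -/
def tauBs (𝔅 : BornologyOn X) : TopologicalSpace C(X, ℝ) :=
  TopologicalSpace.generateFrom
    {S | ∃ f : C(X, ℝ), ∃ B ∈ 𝔅.sets, ∃ ε > 0, S = sball f B ε}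

/-- Countable `T`-tightness of a topological space. -/
def CountableTTightness {Y : Type*} (t : TopologicalSpace Y) : Prop :=
  ∀ ρ : Cardinal.{0}, ρ.IsRegular → Cardinal.aleph0 < ρ →
    ∀ A : Ordinal.{0} → Set Y, (∀ α β, α ≤ β → A α ⊆ A β) →
      (∀ α, α < ρ.ord → @IsClosed _ t (A α)) →
      @IsClosed _ t (⋃ α ∈ {α | α < ρ.ord}, A α)

theorem stmt9 (𝔅 : BornologyOn X) (hcb : HasClosedBase 𝔅) :
    Sfin (OBs 𝔅) (Ocov X) ↔ Sfin (GBs 𝔅) (Ocov X) := by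
  classical
  constructor
  · -- Sfin(OBs) → Sfin(GBs)
    intro h 𝒰 h𝒰
    by_cases hu : ∃ n, (univ : Set X) ∈ 𝒰 n
    · obtain ⟨n, hn⟩ := hu
      refine ⟨fun m => if m = n then {univ} else ∅, fun m => ?_, ?_, ?_, ?_⟩
      · by_cases hm : m = n <;> simp [hm, hn]
      · apply Set.countable_iUnion
        intro m
        by_cases hm : m = n <;> simp [hm]
      · intro U hU
        simp only [mem_iUnion] at hU
        obtain ⟨m, hm⟩ := hU
        by_cases hmn : m = n
        · simp [hmn] at hm; subst hm; exact isOpen_univ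
        · simp [hmn] at hm
      · intro x
        refine ⟨univ, ?_, mem_univ x⟩
        exact mem_iUnion.2 ⟨n, by simp⟩
    · push_neg at hu
      apply h
      intro n
      obtain ⟨hcnt, hinf, hop, hB⟩ := h𝒰 n
      have key : ∀ B ∈ 𝔅.sets, ∃ U ∈ 𝒰 n, ∃ δ > 0, enlarge B δ ⊆ U := by
        intro B hBmem
        have hne : (𝒰 n \ {U ∈ 𝒰 n | ¬ ∃ δ > 0, enlarge B δ ⊆ U}).Nonempty :=
          (hinf.diff (hB B hBmem)).nonempty
        obtain ⟨U, hU𝒰, hUbad⟩ := hne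
        refine ⟨U, hU𝒰, ?_⟩
        by_contra hcon
        exact hUbad ⟨hU𝒰, hcon⟩
      refine ⟨hcnt, hop, ?_, hu n, key⟩
      intro x
      obtain ⟨B, hBmem, hxB⟩ := 𝔅.covers x
      obtain ⟨U, hU𝒰, δ, hδ, hsub⟩ := key B hBmem
      refine ⟨U, hU𝒰, hsub ?_⟩
      exact mem_biUnion hxB (mem_ball_self hδ)
  · -- Sfin(GBs) → Sfin(OBs)
    intro h 𝒰 h𝒰
    by_cases hfin : ∃ n, ∃ F : Set (Set X), F ⊆ 𝒰 n ∧ F.Finite ∧ ⋃₀ F = univ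
    · obtain ⟨n, F, hF𝒰, hFfin, hFcov⟩ := hfin
      refine ⟨fun m => if m = n then F else ∅, fun m => ?_, ?_, ?_, ?_⟩
      · by_cases hm : m = n <;> simp [hm, hF𝒰, hFfin]
      · apply Set.countable_iUnion
        intro m
        by_cases hm : m = n <;> simp [hm, hFfin.countable]
      · intro U hU
        simp only [mem_iUnion] at hU
        obtain ⟨m, hm⟩ := hU
        by_cases hmn : m = n
        · simp only [hmn, if_pos rfl] at hm
          exact (h𝒰 n).2.1 U (hF𝒰 hm)
        · simp [hmn] at hm
      · intro x
        have : x ∈ ⋃₀ F := hFcov ▸ mem_univ x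
        obtain ⟨U, hUF, hxU⟩ := this
        exact ⟨U, mem_iUnion.2 ⟨n, by simp [hUF]⟩, hxU⟩
    · push_neg at hfin
      have hXne : Nonempty X := by
        by_contra hX
        rw [not_nonempty_iff] at hX
        exact hfin 0 ∅ (empty_subset _) finite_empty (by simp [Set.univ_eq_empty_iff.2 hX])
      have h𝒰ne : ∀ n, (𝒰 n).Nonempty := by
        intro n
        obtain ⟨U, hU, _⟩ := (h𝒰 n).2.2.1 hXne.some
        exact ⟨U, hU⟩
      have hf : ∀ n, ∃ f : ℕ → Set X, 𝒰 n = range f := fun n =>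
        Set.Countable.exists_eq_range (h𝒰 n).1 (h𝒰ne n)
      choose f hf using hf
      set W : ℕ → ℕ → Set X := fun n k => ⋃ j ∈ Set.Iic k, f n j with hW
      have hopen : ∀ n j, IsOpen (f n j) := by
        intro n j
        exact (h𝒰 n).2.1 _ (by rw [hf n]; exact mem_range_self j)
      have hWmono : ∀ n, ∀ j k, j ≤ k → W n j ⊆ W n k := by
        intro n j k hjk
        exact Set.biUnion_subset_biUnion_left (Set.Iic_subset_Iic.2 hjk)
      have hWgbs : ∀ n, range (W n) ∈ GBs 𝔅 := by
        intro n
        refine ⟨countable_range _, ?_, ?_, ?_⟩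
        · -- infinite
          intro hrfin
          obtain ⟨M, ⟨K, hK⟩, hMmax⟩ :=
            Set.Finite.exists_maximalFor id _ hrfin ⟨W n 0, mem_range_self 0⟩
          have hMuniv : univ ⊆ M := by
            intro x _
            obtain ⟨U, hU𝒰, hxU⟩ := (h𝒰 n).2.2.1 x
            rw [hf n] at hU𝒰
            obtain ⟨j, rfl⟩ := hU𝒰
            have h1 : M ⊆ W n (j ⊔ K) := hK ▸ hWmono n K (j ⊔ K) le_sup_right
            have h2 : W n (j ⊔ K) = M := le_antisymm (hMmax (mem_range_self _) h1) h1
            have : x ∈ W n (j ⊔ K) :=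
              mem_biUnion (Set.mem_Iic.2 le_sup_left) hxU
            rwa [h2] at this
          refine hfin n (f n '' Set.Iic K) ?_ ((Set.finite_Iic K).image _) ?_
          · rw [hf n]; exact image_subset_range _ _
          · apply Set.eq_univ_of_univ_subset
            intro x hx
            have : x ∈ W n K := hK ▸ hMuniv hx
            obtain ⟨j, hj, hxj⟩ := mem_iUnion₂.1 this
            exact ⟨f n j, mem_image_of_mem _ hj, hxj⟩
        · rintro V ⟨k, rfl⟩
          exact isOpen_biUnion fun j _ => hopen n j
        · intro B hBmem
          obtain ⟨U, hU𝒰, δ, hδ, hsub⟩ := (h𝒰 n).2.2.2.2 B hBmem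
          rw [hf n] at hU𝒰
          obtain ⟨j₀, rfl⟩ := hU𝒰
          apply Set.Finite.subset ((Set.finite_Iio j₀).image (W n))
          rintro V ⟨⟨k, rfl⟩, hbad⟩
          refine ⟨k, ?_, rfl⟩
          by_contra hk
          simp only [Set.mem_Iio, not_lt] at hk
          exact hbad ⟨δ, hδ, hsub.trans
            (subset_biUnion_of_mem (Set.mem_Iic.2 hk))⟩
      obtain ⟨𝒢, h𝒢, h𝒢cov⟩ := h (fun n => range (W n)) hWgbs
      set g : ℕ → Set X → ℕ := fun n V => if hv : ∃ k, W n k = V then hv.choose else 0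
        with hg
      have hgspec : ∀ n, ∀ V ∈ 𝒢 n, W n (g n V) = V := by
        intro n V hV
        have hv : ∃ k, W n k = V := (h𝒢 n).1 hV
        simp only [hg, dif_pos hv]
        exact hv.choose_spec
      refine ⟨fun n => ⋃ V ∈ 𝒢 n, f n '' Set.Iic (g n V), fun n => ⟨?_, ?_⟩, ?_, ?_, ?_⟩
      · rintro U hU
        simp only [mem_iUnion] at hU
        obtain ⟨V, hV, j, _, rfl⟩ := hU
        rw [hf n]; exact mem_range_self j
      · exact (h𝒢 n).2.biUnion fun V _ => (Set.finite_Iic _).image _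
      · apply Set.countable_iUnion
        intro n
        exact ((h𝒢 n).2.biUnion fun V _ => (Set.finite_Iic _).image _).countable
      · intro U hU
        simp only [mem_iUnion] at hU
        obtain ⟨n, V, hV, j, _, rfl⟩ := hU
        exact hopen n j
      · intro x
        obtain ⟨V, hV, hxV⟩ := h𝒢cov.2.2 x
        obtain ⟨n, hVn⟩ := mem_iUnion.1 hV
        have hWV : W n (g n V) = V := hgspec n V hVn
        rw [← hWV] at hxV
        obtain ⟨j, hj, hxj⟩ := mem_iUnion₂.1 hxV
        refine ⟨f n j, ?_, hxj⟩
        exact mem_iUnion.2 ⟨n, mem_iUnion₂.2 ⟨V, hVn, mem_image_of_mem _ hj⟩⟩
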